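/- arXiv:1208.5342 — 3 statements merged into one kernel-verified Lean document; each statement's English description precedes it below -/
import Mathlib

section
/- Let b be an integer, m ≥ 0 and k ≥ 1. Suppose that for each pair (i,j) with 2 ≤ i < j ≤ k and F_{b,m}(p_i p_j) > 0 we are given an integer c_{ij} with the following property: letting y + p_i p_j be the smallest multiple of p_i p_j in the interval (b, b+m], one has gcd(c_{ij} + x, P_{i−1}) = gcd(y + x·p_i p_j, P_{i−1}) for all integers x. Then φ(b,m,k) = m − Σ_{i=1}^{k} F_{b,m}(p_i) + Σ_{j=2}^{k} F_{b,m}(2·p_j) + Σ_{i=2}^{k−1} Σ_{j=i+1}^{k} φ(c_{ij}, F_{b,m}(p_i p_j), i−1). -/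
open Finset

/-- The i-th prime, 1-indexed: `nthPrime 1 = 2`, `nthPrime 2 = 3`, ... -/
noncomputable def nthPrime (i : ℕ) : ℕ := Nat.nth Nat.Prime (i - 1)

/-- `primProd k` is the product `P_k` of the first `k` primes. -/
noncomputable def primProd (k : ℕ) : ℕ := ∏ i ∈ Finset.range k, Nat.nth Nat.Prime i

/-- `Fcount b m d` is the number of integers `a` with `b < a ≤ b + m` divisible by `d`. -/
noncomputable def Fcount (b : ℤ) (m d : ℕ) : ℕ :=
  ((Finset.Ioc b (b + (m : ℤ))).filter (fun a => (d : ℤ) ∣ a)).card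

/-- `phiInt b m k` is the number of integers `a` with `b < a ≤ b + m` coprime to `P_k`. -/
noncomputable def phiInt (b : ℤ) (m k : ℕ) : ℕ :=
  ((Finset.Ioc b (b + (m : ℤ))).filter (fun a => Int.gcd a (primProd k) = 1)).card

/-- `omegaK k a` is the number of indices `i` with `1 ≤ i ≤ k` such that `p_i ∣ a`. -/
noncomputable def omegaK (k : ℕ) (a : ℤ) : ℕ :=
  ((Finset.Icc 1 k).filter (fun i => (nthPrime i : ℤ) ∣ a)).card

/-- `phiMin m k` is the minimum of `phiInt b m k` over all integers `b`. -/
noncomputable def phiMin (m k : ℕ) : ℕ := sInf {n : ℕ | ∃ b : ℤ, phiInt b m k = n}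

section Aux

lemma prime_nthPrime (i : ℕ) : Nat.Prime (nthPrime i) := Nat.prime_nth_prime _

lemma nthPrime_one : nthPrime 1 = 2 := by
  have h : Nat.count Nat.Prime 2 = 0 := by decide
  have := Nat.nth_count (p := Nat.Prime) (by norm_num : Nat.Prime 2)
  rw [h] at this
  simpa [nthPrime] using this

lemma nthPrime_lt {i j : ℕ} (hi : 1 ≤ i) (hij : i < j) : nthPrime i < nthPrime j := by
  unfold nthPrime
  exact (Nat.nth_lt_nth Nat.infinite_setOf_prime).mpr (by omega)

lemma intPrime (i : ℕ) : Prime ((nthPrime i : ℤ)) := by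
  rw [Int.prime_iff_natAbs_prime]
  simpa using prime_nthPrime i

lemma gcd_primProd_eq_one_iff (a : ℤ) (n : ℕ) :
    Int.gcd a (primProd n) = 1 ↔ ∀ i ∈ Finset.Icc 1 n, ¬ ((nthPrime i : ℤ) ∣ a) := by
  rw [← Int.isCoprime_iff_gcd_eq_one]
  have hp : ((primProd n : ℕ) : ℤ) = ∏ l ∈ Finset.range n, ((Nat.nth Nat.Prime l : ℕ) : ℤ) := by
    simp [primProd]
  rw [hp, IsCoprime.prod_right_iff]
  constructor
  · intro h i hi
    simp only [mem_Icc] at hi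
    have := h (i - 1) (by simp only [mem_range]; omega)
    have hpr : Prime ((Nat.nth Nat.Prime (i-1) : ℕ) : ℤ) := intPrime i
    rw [isCoprime_comm, hpr.coprime_iff_not_dvd] at this
    exact this
  · intro h l hl
    simp only [mem_range] at hl
    have := h (l + 1) (by simp only [mem_Icc]; omega)
    have hpr : Prime ((Nat.nth Nat.Prime l : ℕ) : ℤ) := by
      have := intPrime (l+1); simpa [nthPrime] using this
    rw [isCoprime_comm, hpr.coprime_iff_not_dvd]
    simpa [nthPrime] using this

lemma mul_dvd_iff' {i j : ℕ} (hi : 1 ≤ i) (hij : i < j) (a : ℤ) :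
    ((nthPrime i * nthPrime j : ℕ) : ℤ) ∣ a ↔
      (nthPrime i : ℤ) ∣ a ∧ (nthPrime j : ℤ) ∣ a := by
  push_cast
  constructor
  · intro h
    exact ⟨(dvd_mul_right _ _).trans h, (dvd_mul_left _ _).trans h⟩
  · rintro ⟨h1, h2⟩
    have hco : IsCoprime ((nthPrime i : ℤ)) ((nthPrime j : ℤ)) :=
      Nat.Coprime.isCoprime ((Nat.coprime_primes (prime_nthPrime i) (prime_nthPrime j)).mpr
        (Nat.ne_of_lt (nthPrime_lt hi hij)))
    exact hco.mul_dvd h1 h2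

lemma phiInt_transfer (b : ℤ) (m q n : ℕ) (hq : 0 < q) (c : ℤ)
    (hF : 0 < Fcount b m q)
    (hgcd : ∀ y : ℤ,
      (b < y + (q:ℤ) ∧ y + (q:ℤ) ≤ b + (m:ℤ) ∧ (q:ℤ) ∣ (y + (q:ℤ)) ∧
        ∀ a ∈ Finset.Ioc b (b + (m:ℤ)), (q:ℤ) ∣ a → y + (q:ℤ) ≤ a) →
      ∀ x : ℤ, Int.gcd (c + x) (primProd n) = Int.gcd (y + x * (q:ℤ)) (primProd n)) :
    phiInt c (Fcount b m q) n =
      ((Finset.Ioc b (b + (m:ℤ))).filter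
        (fun a => (q:ℤ) ∣ a ∧ Int.gcd a (primProd n) = 1)).card := by
  classical
  have hq' : (0:ℤ) < (q:ℤ) := by exact_mod_cast hq
  set M : Finset ℤ := (Finset.Ioc b (b + (m:ℤ))).filter (fun a => (q:ℤ) ∣ a) with hM
  have hcard : M.card = Fcount b m q := rfl
  have hne : M.Nonempty := card_pos.mp (by rw [hcard]; exact hF)
  set y' : ℤ := M.min' hne with hy'
  have hy'M : y' ∈ M := M.min'_mem hne
  have hy'le : ∀ a ∈ M, y' ≤ a := fun a ha => M.min'_le a ha
  have hy'Ioc : y' ∈ Finset.Ioc b (b + (m:ℤ)) ∧ (q:ℤ) ∣ y' := by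
    simpa [hM, Finset.mem_filter] using hy'M
  obtain ⟨hy'I, hy'dvd⟩ := hy'Ioc
  rw [Finset.mem_Ioc] at hy'I
  have key : ∀ x : ℤ, Int.gcd (c + x) (primProd n) = Int.gcd (y' + (x - 1) * (q:ℤ)) (primProd n) := by
    intro x
    have h := hgcd (y' - q) ⟨by simpa using hy'I.1, by simpa using hy'I.2,
      by simpa using hy'dvd, by
        intro a ha hdvd
        have : a ∈ M := by simp [hM, Finset.mem_filter, ha, hdvd]
        simpa using hy'le a this⟩ x
    rw [h]; ring_nf
  have hnn : 0 ≤ b + (m:ℤ) - y' := by linarith [hy'I.2]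
  set T : ℕ := ((b + (m:ℤ) - y') / q).toNat with hT
  have hTval : (T:ℤ) = (b + (m:ℤ) - y') / q := Int.toNat_of_nonneg (Int.ediv_nonneg hnn hq'.le)
  have hTmul : (T:ℤ) * q ≤ b + (m:ℤ) - y' := by
    rw [hTval]
    have := Int.emod_nonneg (b + (m:ℤ) - y') hq'.ne'
    have h2 := Int.mul_ediv_add_emod (b + (m:ℤ) - y') (q:ℤ)
    linarith [h2, this]
  have himg : M = (Finset.range (T+1)).image (fun t : ℕ => y' + (t:ℤ) * q) := by
    ext z
    simp only [hM, Finset.mem_filter, Finset.mem_Ioc, Finset.mem_image, Finset.mem_range]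
    constructor
    · rintro ⟨⟨hz1, hz2⟩, hzdvd⟩
      have hzM : z ∈ M := by simp [hM, Finset.mem_filter, Finset.mem_Ioc, hz1, hz2, hzdvd]
      have hle : y' ≤ z := hy'le z hzM
      obtain ⟨s, hs⟩ := dvd_sub hzdvd hy'dvd
      have hs0 : 0 ≤ s := by nlinarith
      refine ⟨s.toNat, ?_, ?_⟩
      · have : s ≤ (b + (m:ℤ) - y') / q := by
          rw [Int.le_ediv_iff_mul_le hq']
          nlinarith
        omega
      · rw [Int.toNat_of_nonneg hs0]; linarith [hs]
    · rintro ⟨t, ht, rfl⟩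
      have htT : (t:ℤ) ≤ (T:ℤ) := by exact_mod_cast Nat.lt_succ_iff.mp ht
      have h1 : (t:ℤ) * q ≤ (T:ℤ) * q := by
        apply mul_le_mul_of_nonneg_right htT hq'.le
      refine ⟨⟨by nlinarith [hy'I.1], by linarith⟩, dvd_add hy'dvd ⟨(t:ℤ), by ring⟩⟩
  have hFT : Fcount b m q = T + 1 := by
    rw [← hcard, himg, Finset.card_image_of_injective _ ?_, Finset.card_range]
    intro t1 t2 h
    have : (t1:ℤ) * q = (t2:ℤ) * q := by linarith [h, add_left_cancel h]
    have := mul_right_cancel₀ hq'.ne' this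
    exact_mod_cast this
  rw [phiInt, hFT]
  rw [show ((Finset.Ioc b (b + (m:ℤ))).filter (fun a => (q:ℤ) ∣ a ∧ Int.gcd a (primProd n) = 1))
      = M.filter (fun a => Int.gcd a (primProd n) = 1) by
    rw [hM, Finset.filter_filter]]
  apply Finset.card_bij' (fun a _ => y' + (a - c - 1) * q) (fun z _ => c + (z - y') / q + 1)
  · intro a ha
    simp only [Finset.mem_filter, Finset.mem_Ioc] at ha
    obtain ⟨⟨ha1, ha2⟩, hagcd⟩ := ha
    have hx1 : 1 ≤ a - c := by linarith
    have hx2 : a - c ≤ (T:ℤ) + 1 := by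
      have : ((T+1 : ℕ):ℤ) = (T:ℤ)+1 := by push_cast; ring
      linarith [ha2, this]
    simp only [Finset.mem_filter, himg, Finset.mem_image, Finset.mem_range]
    refine ⟨⟨(a - c - 1).toNat, by omega, by rw [Int.toNat_of_nonneg (by linarith)]⟩, ?_⟩
    have := key (a - c)
    rw [show c + (a - c) = a by ring] at this
    rw [← this]; exact hagcd
  · intro z hz
    simp only [Finset.mem_filter, himg, Finset.mem_image, Finset.mem_range] at hz
    obtain ⟨⟨t, ht, rfl⟩, hzgcd⟩ := hz
    have hdivq : (y' + (t:ℤ) * q - y') / q = (t:ℤ) := by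
      rw [show y' + (t:ℤ) * q - y' = (t:ℤ) * q by ring]
      exact Int.mul_ediv_cancel _ hq'.ne'
    simp only [Finset.mem_filter, Finset.mem_Ioc, hdivq]
    refine ⟨⟨by linarith [Int.natCast_nonneg t], ?_⟩, ?_⟩
    · push_cast
      have : (t:ℤ) ≤ (T:ℤ) := by exact_mod_cast Nat.lt_succ_iff.mp ht
      linarith
    · have := key ((t:ℤ) + 1)
      rw [show y' + ((t:ℤ) + 1 - 1) * q = y' + (t:ℤ)*q by ring] at this
      rw [show c + (t:ℤ) + 1 = c + ((t:ℤ)+1) by ring, this]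
      exact hzgcd
  · intro a ha
    have : (y' + (a - c - 1) * q - y') / q = a - c - 1 := by
      rw [show y' + (a-c-1) * q - y' = (a-c-1) * q by ring]
      exact Int.mul_ediv_cancel _ hq'.ne'
    rw [this]; ring
  · intro z hz
    simp only [Finset.mem_filter, himg, Finset.mem_image, Finset.mem_range] at hz
    obtain ⟨⟨t, ht, rfl⟩, hzgcd⟩ := hz
    have hdivq : (y' + (t:ℤ) * q - y') / q = (t:ℤ) := by
      rw [show y' + (t:ℤ) * q - y' = (t:ℤ) * q by ring]
      exact Int.mul_ediv_cancel _ hq'.ne'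
    rw [hdivq]; ring

lemma pointwise (k : ℕ) (hk : 1 ≤ k) (a : ℤ) :
    (if Int.gcd a (primProd k) = 1 then (1:ℤ) else 0) =
      1 - (∑ i ∈ Finset.Icc 1 k, if (nthPrime i:ℤ) ∣ a then (1:ℤ) else 0)
        + (∑ j ∈ Finset.Icc 2 k, if ((2 * nthPrime j : ℕ):ℤ) ∣ a then (1:ℤ) else 0)
        + ∑ i ∈ Finset.Icc 2 k, ∑ j ∈ Finset.Icc (i+1) k,
            (if ((nthPrime i * nthPrime j : ℕ):ℤ) ∣ a ∧ Int.gcd a (primProd (i-1)) = 1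
              then (1:ℤ) else 0) := by
  classical
  set S := (Finset.Icc 1 k).filter (fun i => (nthPrime i:ℤ) ∣ a) with hS
  have h1sum : (∑ i ∈ Finset.Icc 1 k, if (nthPrime i:ℤ) ∣ a then (1:ℤ) else 0) = (S.card : ℤ) := by
    rw [Finset.sum_boole]
  rw [h1sum]
  by_cases hSe : S = ∅
  · have hnd : ∀ i ∈ Finset.Icc 1 k, ¬ ((nthPrime i:ℤ) ∣ a) := by
      intro i hi hd
      have : i ∈ S := Finset.mem_filter.mpr ⟨hi, hd⟩
      simp [hSe] at this
    rw [if_pos ((gcd_primProd_eq_one_iff a k).mpr hnd)]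
    have h2 : (∑ j ∈ Finset.Icc 2 k, if ((2 * nthPrime j : ℕ):ℤ) ∣ a then (1:ℤ) else 0) = 0 := by
      apply Finset.sum_eq_zero
      intro j hj
      rw [Finset.mem_Icc] at hj
      rw [if_neg]
      intro hd
      have : (nthPrime j : ℤ) ∣ a := by
        refine dvd_trans ?_ hd; push_cast; exact dvd_mul_left _ _
      exact hnd j (Finset.mem_Icc.mpr ⟨by omega, hj.2⟩) this
    have h3 : (∑ i ∈ Finset.Icc 2 k, ∑ j ∈ Finset.Icc (i+1) k,
        (if ((nthPrime i * nthPrime j : ℕ):ℤ) ∣ a ∧ Int.gcd a (primProd (i-1)) = 1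
          then (1:ℤ) else 0)) = 0 := by
      apply Finset.sum_eq_zero
      intro i hi
      apply Finset.sum_eq_zero
      intro j hj
      rw [Finset.mem_Icc] at hi
      rw [if_neg]
      rintro ⟨hd, -⟩
      have : (nthPrime i : ℤ) ∣ a := by
        refine dvd_trans ?_ hd; push_cast; exact dvd_mul_right _ _
      exact hnd i (Finset.mem_Icc.mpr ⟨by omega, hi.2⟩) this
    rw [h2, h3, hSe]
    simp
  · have hne : S.Nonempty := Finset.nonempty_iff_ne_empty.mpr hSe
    have hχ : Int.gcd a (primProd k) ≠ 1 := by
      obtain ⟨i, hi⟩ := hne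
      rw [hS, Finset.mem_filter] at hi
      intro h
      exact (gcd_primProd_eq_one_iff a k).mp h i hi.1 hi.2
    rw [if_neg hχ]
    set i₀ := S.min' hne with hi₀
    have hi₀S : i₀ ∈ S := S.min'_mem hne
    have hi₀min : ∀ l ∈ S, i₀ ≤ l := fun l hl => S.min'_le l hl
    have hi₀mem : i₀ ∈ Finset.Icc 1 k ∧ (nthPrime i₀ : ℤ) ∣ a := by
      simpa [hS, Finset.mem_filter] using hi₀S
    rw [Finset.mem_Icc] at hi₀mem
    have hcard1 : 1 ≤ S.card := Finset.card_pos.mpr hne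
    have hmemS : ∀ l, l ∈ S ↔ (1 ≤ l ∧ l ≤ k) ∧ (nthPrime l : ℤ) ∣ a := by
      intro l; rw [hS, Finset.mem_filter, Finset.mem_Icc]
    have hgcdiff : ∀ i, 1 ≤ i → i ≤ k →
        (Int.gcd a (primProd (i-1)) = 1 ↔ ∀ l ∈ S, i ≤ l) := by
      intro i h1 h2
      rw [gcd_primProd_eq_one_iff]
      constructor
      · intro h l hl
        by_contra hlt
        have hl' := (hmemS l).mp hl
        exact h l (Finset.mem_Icc.mpr ⟨hl'.1.1, by omega⟩) hl'.2
      · intro h l hl hdvd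
        rw [Finset.mem_Icc] at hl
        have : l ∈ S := (hmemS l).mpr ⟨⟨hl.1, by omega⟩, hdvd⟩
        have := h l this
        omega
    by_cases h2a : (nthPrime 1 : ℤ) ∣ a
    · have h1S : 1 ∈ S := (hmemS 1).mpr ⟨⟨le_refl _, hk⟩, h2a⟩
      have h2 : (∑ j ∈ Finset.Icc 2 k, if ((2 * nthPrime j : ℕ):ℤ) ∣ a then (1:ℤ) else 0)
          = ((S.erase 1).card : ℤ) := by
        rw [Finset.sum_boole]
        congr 2
        ext j
        simp only [Finset.mem_filter, Finset.mem_Icc, Finset.mem_erase, hmemS]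
        constructor
        · rintro ⟨⟨hj2, hjk⟩, hd⟩
          have := (mul_dvd_iff' (le_refl 1) (by omega : 1 < j) a).mp (by rwa [nthPrime_one])
          exact ⟨by omega, ⟨by omega, hjk⟩, this.2⟩
        · rintro ⟨hj1, ⟨hj1', hjk⟩, hd⟩
          refine ⟨⟨by omega, hjk⟩, ?_⟩
          rw [← nthPrime_one]
          exact (mul_dvd_iff' (le_refl 1) (by omega : 1 < j) a).mpr ⟨h2a, hd⟩
      have h3 : (∑ i ∈ Finset.Icc 2 k, ∑ j ∈ Finset.Icc (i+1) k,
          (if ((nthPrime i * nthPrime j : ℕ):ℤ) ∣ a ∧ Int.gcd a (primProd (i-1)) = 1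
            then (1:ℤ) else 0)) = 0 := by
        apply Finset.sum_eq_zero
        intro i hi
        apply Finset.sum_eq_zero
        intro j hj
        rw [Finset.mem_Icc] at hi
        rw [if_neg]
        rintro ⟨-, hg⟩
        have := (hgcdiff i (by omega) hi.2).mp hg 1 h1S
        omega
      rw [h2, h3, Finset.card_erase_of_mem h1S]
      have : ((S.card - 1 : ℕ) : ℤ) = (S.card : ℤ) - 1 := by
        rw [Nat.cast_sub hcard1]; norm_num
      rw [this]; ring
    · have h1S : 1 ∉ S := fun h => h2a ((hmemS 1).mp h).2
      have hi₀2 : 2 ≤ i₀ := by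
        rcases Nat.lt_or_ge i₀ 2 with h | h
        · interval_cases i₀
          · omega
          · exact absurd hi₀S h1S
        · exact h
      have h2 : (∑ j ∈ Finset.Icc 2 k, if ((2 * nthPrime j : ℕ):ℤ) ∣ a then (1:ℤ) else 0) = 0 := by
        apply Finset.sum_eq_zero
        intro j hj
        rw [if_neg]
        intro hd
        apply h2a
        rw [nthPrime_one]
        refine dvd_trans ?_ hd; push_cast; exact dvd_mul_right _ _
      have h3 : (∑ i ∈ Finset.Icc 2 k, ∑ j ∈ Finset.Icc (i+1) k,
          (if ((nthPrime i * nthPrime j : ℕ):ℤ) ∣ a ∧ Int.gcd a (primProd (i-1)) = 1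
            then (1:ℤ) else 0)) = ((S.erase i₀).card : ℤ) := by
        rw [Finset.sum_eq_single_of_mem i₀ (Finset.mem_Icc.mpr ⟨hi₀2, hi₀mem.1.2⟩)]
        · rw [Finset.sum_boole]
          congr 2
          ext j
          simp only [Finset.mem_filter, Finset.mem_Icc, Finset.mem_erase]
          constructor
          · rintro ⟨⟨hj1, hj2⟩, hd, -⟩
            have := (mul_dvd_iff' (by omega : 1 ≤ i₀) (by omega : i₀ < j) a).mp hd
            exact ⟨by omega, (hmemS j).mpr ⟨⟨by omega, hj2⟩, this.2⟩⟩
          · rintro ⟨hjne, hjS⟩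
            have hj' := (hmemS j).mp hjS
            have hij : i₀ < j := lt_of_le_of_ne (hi₀min j hjS) (Ne.symm hjne)
            refine ⟨⟨by omega, hj'.1.2⟩, ?_, ?_⟩
            · exact (mul_dvd_iff' (by omega) hij a).mpr ⟨hi₀mem.2, hj'.2⟩
            · exact (hgcdiff i₀ (by omega) hi₀mem.1.2).mpr hi₀min
        · intro i hi hine
          apply Finset.sum_eq_zero
          intro j hj
          rw [Finset.mem_Icc] at hi
          rw [if_neg]
          rintro ⟨hd, hg⟩
          have hpi : (nthPrime i : ℤ) ∣ a := by
            refine dvd_trans ?_ hd; push_cast; exact dvd_mul_right _ _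
          have hiS : i ∈ S := (hmemS i).mpr ⟨⟨by omega, hi.2⟩, hpi⟩
          have h1 := (hgcdiff i (by omega) hi.2).mp hg i₀ hi₀S
          have h2 := hi₀min i hiS
          omega
      rw [h2, h3, Finset.card_erase_of_mem hi₀S]
      have : ((S.card - 1 : ℕ) : ℤ) = (S.card : ℤ) - 1 := by
        rw [Nat.cast_sub hcard1]; norm_num
      rw [this]; ring

end Aux

/-- Given suitable transfer constants `c i j` for each pair `2 ≤ i < j ≤ k` with
`F_{b,m}(p_i p_j) > 0`, we have
`φ(b,m,k) = m − Σ_{i=1}^{k} F_{b,m}(p_i) + Σ_{j=2}^{k} F_{b,m}(2 p_j)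
  + Σ_{i=2}^{k−1} Σ_{j=i+1}^{k} φ(c_{ij}, F_{b,m}(p_i p_j), i−1)`. -/
theorem phiInt_recurrence (b : ℤ) (m k : ℕ) (hk : 1 ≤ k) (c : ℕ → ℕ → ℤ)
    (hc : ∀ i j : ℕ, 2 ≤ i → i < j → j ≤ k →
      0 < Fcount b m (nthPrime i * nthPrime j) →
      ∀ y : ℤ,
        (b < y + ((nthPrime i * nthPrime j : ℕ) : ℤ) ∧
          y + ((nthPrime i * nthPrime j : ℕ) : ℤ) ≤ b + (m : ℤ) ∧
          ((nthPrime i * nthPrime j : ℕ) : ℤ) ∣ (y + ((nthPrime i * nthPrime j : ℕ) : ℤ)) ∧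
          ∀ a ∈ Finset.Ioc b (b + (m : ℤ)), ((nthPrime i * nthPrime j : ℕ) : ℤ) ∣ a →
            y + ((nthPrime i * nthPrime j : ℕ) : ℤ) ≤ a) →
        ∀ x : ℤ, Int.gcd (c i j + x) (primProd (i - 1)) =
          Int.gcd (y + x * ((nthPrime i * nthPrime j : ℕ) : ℤ)) (primProd (i - 1))) :
    (phiInt b m k : ℤ) =
      (m : ℤ) - (∑ i ∈ Finset.Icc 1 k, (Fcount b m (nthPrime i) : ℤ)) +
        (∑ j ∈ Finset.Icc 2 k, (Fcount b m (2 * nthPrime j) : ℤ)) +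
        ∑ i ∈ Finset.Icc 2 (k - 1), ∑ j ∈ Finset.Icc (i + 1) k,
          (phiInt (c i j) (Fcount b m (nthPrime i * nthPrime j)) (i - 1) : ℤ) := by
  classical
  have hext : (∑ i ∈ Finset.Icc 2 (k-1), ∑ j ∈ Finset.Icc (i+1) k,
      (phiInt (c i j) (Fcount b m (nthPrime i * nthPrime j)) (i-1) : ℤ))
      = ∑ i ∈ Finset.Icc 2 k, ∑ j ∈ Finset.Icc (i+1) k,
          (phiInt (c i j) (Fcount b m (nthPrime i * nthPrime j)) (i-1) : ℤ) := by
    apply Finset.sum_subset (Finset.Icc_subset_Icc_right (by omega))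
    intro i hi hni
    rw [Finset.mem_Icc] at hi
    rw [Finset.mem_Icc] at hni
    rw [Finset.Icc_eq_empty (by omega : ¬ i + 1 ≤ k)]
    simp
  rw [hext]
  have htrans : ∀ i ∈ Finset.Icc 2 k, ∀ j ∈ Finset.Icc (i+1) k,
      (phiInt (c i j) (Fcount b m (nthPrime i * nthPrime j)) (i-1) : ℤ)
        = ∑ a ∈ Finset.Ioc b (b + (m:ℤ)),
            (if ((nthPrime i * nthPrime j : ℕ):ℤ) ∣ a ∧ Int.gcd a (primProd (i-1)) = 1
              then (1:ℤ) else 0) := by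
    intro i hi j hj
    rw [Finset.mem_Icc] at hi hj
    rw [Finset.sum_boole]
    by_cases hF : 0 < Fcount b m (nthPrime i * nthPrime j)
    · rw [phiInt_transfer b m _ _ (Nat.mul_pos (prime_nthPrime i).pos (prime_nthPrime j).pos)
        (c i j) hF (fun y hy x => hc i j hi.1 (by omega) hj.2 hF y hy x)]
    · have hF0 : Fcount b m (nthPrime i * nthPrime j) = 0 := by omega
      have hfe : ((Finset.Ioc b (b + (m:ℤ))).filter
          (fun a => ((nthPrime i * nthPrime j : ℕ):ℤ) ∣ a)) = ∅ :=
        Finset.card_eq_zero.mp hF0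
      have h2 : ((Finset.Ioc b (b + (m:ℤ))).filter
          (fun a => ((nthPrime i * nthPrime j : ℕ):ℤ) ∣ a ∧ Int.gcd a (primProd (i-1)) = 1)) = ∅ := by
        rw [Finset.filter_eq_empty_iff]
        rintro a ha ⟨hd, -⟩
        have : a ∈ (Finset.Ioc b (b + (m:ℤ))).filter
            (fun a => ((nthPrime i * nthPrime j : ℕ):ℤ) ∣ a) := Finset.mem_filter.mpr ⟨ha, hd⟩
        rw [hfe] at this
        exact absurd this (Finset.notMem_empty a)
      rw [hF0, h2]
      simp [phiInt]
  have hDD0 := Finset.sum_congr rfl (fun i hi => Finset.sum_congr rfl (fun j hj => htrans i hi j hj))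
  have hsw : (∑ i ∈ Finset.Icc 2 k, ∑ j ∈ Finset.Icc (i+1) k, ∑ a ∈ Finset.Ioc b (b + (m:ℤ)),
      (if ((nthPrime i * nthPrime j : ℕ):ℤ) ∣ a ∧ Int.gcd a (primProd (i-1)) = 1
        then (1:ℤ) else 0))
      = ∑ a ∈ Finset.Ioc b (b + (m:ℤ)), ∑ i ∈ Finset.Icc 2 k, ∑ j ∈ Finset.Icc (i+1) k,
          (if ((nthPrime i * nthPrime j : ℕ):ℤ) ∣ a ∧ Int.gcd a (primProd (i-1)) = 1
            then (1:ℤ) else 0) := by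
    rw [Finset.sum_congr rfl (fun i _ => Finset.sum_comm)]
    exact Finset.sum_comm
  have hL : (phiInt b m k : ℤ) = ∑ a ∈ Finset.Ioc b (b + (m:ℤ)),
      (if Int.gcd a (primProd k) = 1 then (1:ℤ) else 0) := by
    rw [phiInt, Finset.sum_boole]
  have hm : (m : ℤ) = ∑ a ∈ Finset.Ioc b (b + (m:ℤ)), (1:ℤ) := by
    rw [Finset.sum_const, Int.card_Ioc]
    simp
  have hF1 : (∑ i ∈ Finset.Icc 1 k, (Fcount b m (nthPrime i) : ℤ))
      = ∑ a ∈ Finset.Ioc b (b + (m:ℤ)), ∑ i ∈ Finset.Icc 1 k,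
          (if (nthPrime i : ℤ) ∣ a then (1:ℤ) else 0) := by
    rw [← Finset.sum_comm]
    apply Finset.sum_congr rfl
    intro i _
    rw [Finset.sum_boole]
    rfl
  have hF2 : (∑ j ∈ Finset.Icc 2 k, (Fcount b m (2 * nthPrime j) : ℤ))
      = ∑ a ∈ Finset.Ioc b (b + (m:ℤ)), ∑ j ∈ Finset.Icc 2 k,
          (if ((2 * nthPrime j : ℕ) : ℤ) ∣ a then (1:ℤ) else 0) := by
    rw [← Finset.sum_comm]
    apply Finset.sum_congr rfl
    intro j _
    rw [Finset.sum_boole]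
    rfl
  have hDD := hDD0.trans hsw
  rw [hL, Finset.sum_congr rfl (fun a _ => pointwise k hk a),
    Finset.sum_add_distrib, Finset.sum_add_distrib, Finset.sum_sub_distrib,
    ← hm, ← hF1, ← hF2, ← hDD]
end

section
/- Let p and q be distinct primes, let m ≥ 0, and set x = m mod p. If x > 0 and q divides m − x + p, then for every integer b: F_{b,m}(p) = ⌈m/p⌉ implies F_{b,m}(p·q) = ⌈m/(p·q)⌉. -/
open Finset

lemma Fcount_eq_int (b : ℤ) (m d : ℕ) (hd : 0 < d) :
    (Fcount b m d : ℤ) = (b + (m : ℤ)) / (d : ℤ) - b / (d : ℤ) := by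
  have hd' : (0 : ℤ) < (d : ℤ) := by exact_mod_cast hd
  have key := Int.Ioc_filter_dvd_card b (b + (m : ℤ)) hd'
  unfold Fcount
  rw [key, show (((d : ℤ)) : ℚ) = ((d : ℕ) : ℚ) by norm_cast,
    Rat.floor_intCast_div_natCast, Rat.floor_intCast_div_natCast]
  have hle : b / (d : ℤ) ≤ (b + (m : ℤ)) / (d : ℤ) :=
    Int.ediv_le_ediv hd' (le_add_of_nonneg_right (by positivity))
  rw [sup_eq_left.mpr (by linarith)]

lemma ediv_ediv' (a : ℤ) (p q : ℤ) (hp : 0 < p) (hq : 0 < q) :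
    a / (p * q) = a / p / q := by
  have e1 : a % p + p * (a / p) = a := Int.emod_add_mul_ediv a p
  have e2 : a / p % q + q * (a / p / q) = a / p := Int.emod_add_mul_ediv (a / p) q
  have h1 : a = (a % p + p * (a / p % q)) + (p * q) * (a / p / q) := by
    linear_combination -e1 - p * e2
  have h4 : 0 ≤ a % p := Int.emod_nonneg a hp.ne'
  have h5 : 0 ≤ a / p % q := Int.emod_nonneg (a / p) hq.ne'
  have h2 : a % p < p := Int.emod_lt_of_pos a hp
  have h3 : a / p % q < q := Int.emod_lt_of_pos (a / p) hq
  conv_lhs => rw [h1]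
  rw [mul_comm (p * q) (a / p / q),
    Int.add_mul_ediv_right _ _ (mul_pos hp hq).ne',
    Int.ediv_eq_zero_of_lt (add_nonneg h4 (mul_nonneg hp.le h5)) (by nlinarith), zero_add]

/-- For distinct primes `p`, `q` and `m ≥ 0` with `x = m mod p`: if `x > 0` and
`q ∣ m − x + p`, then `F_{b,m}(p) = ⌈m/p⌉` implies `F_{b,m}(pq) = ⌈m/(pq)⌉`. -/
theorem Fcount_ceil_of_ceil (p q m : ℕ) (hp : p.Prime) (hq : q.Prime) (hpq : p ≠ q)
    (x : ℕ) (hx : x = m % p) (hxpos : 0 < x) (hdvd : q ∣ m - x + p) (b : ℤ)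
    (h : (Fcount b m p : ℤ) = ⌈(m : ℚ) / (p : ℚ)⌉) :
    (Fcount b m (p * q) : ℤ) = ⌈(m : ℚ) / ((p * q : ℕ) : ℚ)⌉ := by
  have hp0 : 0 < p := hp.pos
  have hq0 : 0 < q := hq.pos
  have hxlt : x < p := by rw [hx]; exact Nat.mod_lt _ hp0
  have hxle : x ≤ m := by rw [hx]; exact Nat.mod_le _ _
  have hm' : m = p * (m / p) + x := by rw [hx]; exact (Nat.div_add_mod m p).symm
  have hdvd' : q ∣ m / p + 1 := by
    have h1 : q ∣ p * (m / p + 1) := by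
      have hsub : m - x = p * (m / p) := Nat.sub_eq_of_eq_add hm'
      rw [Nat.mul_add, mul_one, ← hsub]; exact hdvd
    rcases (Nat.Prime.dvd_mul hq).mp h1 with h2 | h2
    · exact absurd ((Nat.prime_dvd_prime_iff_eq hq hp).mp h2).symm hpq
    · exact h2
  obtain ⟨s, hs⟩ := hdvd'
  have hs1 : 1 ≤ s := by
    have hsne : s ≠ 0 := by rintro rfl; simp at hs
    omega
  -- integer facts
  have hP0 : (0 : ℤ) < (p : ℤ) := by exact_mod_cast hp0
  have hQ0 : (0 : ℤ) < (q : ℤ) := by exact_mod_cast hq0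
  have hMeq : (m : ℤ) = (p : ℤ) * ((m / p : ℕ) : ℤ) + (x : ℤ) := by exact_mod_cast hm'
  have hXpos : (0 : ℤ) < (x : ℤ) := by exact_mod_cast hxpos
  have hXlt : (x : ℤ) < (p : ℤ) := by exact_mod_cast hxlt
  have hFS : ((m / p : ℕ) : ℤ) + 1 = (q : ℤ) * (s : ℤ) := by exact_mod_cast hs
  -- rewrite hypothesis
  rw [Fcount_eq_int b m p hp0] at h
  have hceil1 : ⌈(m : ℚ) / (p : ℚ)⌉ = ((m / p : ℕ) : ℤ) + 1 := by
    rw [Int.ceil_eq_iff]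
    have hp0' : (0 : ℚ) < (p : ℚ) := by exact_mod_cast hp0
    have hQm : (m : ℚ) = (p : ℚ) * ((m / p : ℕ) : ℚ) + (x : ℚ) := by exact_mod_cast hm'
    have hx1 : (0 : ℚ) < (x : ℚ) := by exact_mod_cast hxpos
    have hx2 : (x : ℚ) < (p : ℚ) := by exact_mod_cast hxlt
    have e : ((((m / p : ℕ) : ℤ) + 1 : ℤ) : ℚ) = ((m / p : ℕ) : ℚ) + 1 := by norm_cast
    rw [e]
    constructor
    · rw [lt_div_iff₀ hp0']; nlinarith
    · rw [div_le_iff₀ hp0']; nlinarith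
  rw [hceil1] at h
  have hbM : (b + (m : ℤ)) / (p : ℤ) = b / (p : ℤ) + (q : ℤ) * (s : ℤ) := by
    linarith [h, hFS]
  have hLHS : (Fcount b m (p * q) : ℤ) = (s : ℤ) := by
    rw [Fcount_eq_int b m (p * q) (Nat.mul_pos hp0 hq0),
      show ((p * q : ℕ) : ℤ) = (p : ℤ) * (q : ℤ) by push_cast; ring,
      ediv_ediv' _ _ _ hP0 hQ0, ediv_ediv' _ _ _ hP0 hQ0, hbM,
      Int.add_mul_ediv_left _ _ hQ0.ne']
    ring
  rw [hLHS, eq_comm, Int.ceil_eq_iff,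
    show ((p * q : ℕ) : ℚ) = ((p : ℚ) * (q : ℚ)) by push_cast; ring]
  have hp0' : (0 : ℚ) < (p : ℚ) := by exact_mod_cast hp0
  have hq0' : (0 : ℚ) < (q : ℚ) := by exact_mod_cast hq0
  have hMQ : (m : ℚ) = (p : ℚ) * (q : ℚ) * (s : ℚ) - (p : ℚ) + (x : ℚ) := by
    have hz : (m : ℤ) = (p : ℤ) * (q : ℤ) * (s : ℤ) - (p : ℤ) + (x : ℤ) := by
      linear_combination hMeq + (p : ℤ) * hFS
    exact_mod_cast hz
  have hx1 : (0 : ℚ) < (x : ℚ) := by exact_mod_cast hxpos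
  have hx2 : (x : ℚ) < (p : ℚ) := by exact_mod_cast hxlt
  have hS1 : (1 : ℚ) ≤ (s : ℚ) := by exact_mod_cast hs1
  have hq1 : (1 : ℚ) ≤ (q : ℚ) := by exact_mod_cast hq0
  constructor
  · rw [lt_div_iff₀ (by positivity)]; push_cast; nlinarith
  · rw [div_le_iff₀ (by positivity)]; push_cast; nlinarith
end

section
/- For all integers m ≥ 0 and k ≥ 1 there exists an integer b such that φ(b,m,k) = φ_min(m,k) and, for every odd prime p dividing m − 1, F_{b,m}(p) = ⌈m/p⌉ implies F_{b,m}(2p) = ⌈m/(2p)⌉. -/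
open Finset

lemma fcount_eq (b : ℤ) (m d : ℕ) (hd : 0 < d) :
    (Fcount b m d : ℤ) = (b + m) / (d : ℤ) - b / (d : ℤ) := by
  have hd' : (0:ℤ) < (d:ℤ) := by exact_mod_cast hd
  have h := Int.Ioc_filter_dvd_card b (b + m) hd'
  have f1 : ⌊((b : ℤ) : ℚ) / (((d:ℤ)) : ℚ)⌋ = b / (d:ℤ) := by
    rw [show (((d:ℤ)) : ℚ) = ((d:ℕ) : ℚ) by push_cast; ring]
    exact Rat.floor_intCast_div_natCast b d
  have f2 : ⌊(((b + m : ℤ)) : ℚ) / (((d:ℤ)) : ℚ)⌋ = (b + m) / (d:ℤ) := by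
    rw [show (((d:ℤ)) : ℚ) = ((d:ℕ) : ℚ) by push_cast; ring]
    exact Rat.floor_intCast_div_natCast (b + m) d
  rw [Fcount, h, f1, f2, max_eq_left]
  rw [sub_nonneg]
  exact Int.ediv_le_ediv hd' (by simp)

lemma two_dvd_primProd (k : ℕ) (hk : 1 ≤ k) : 2 ∣ primProd k := by
  have h0 : Nat.nth Nat.Prime 0 = 2 := by
    have := Nat.nth_count (p := Nat.Prime) (n := 2) Nat.prime_two
    rwa [show Nat.count Nat.Prime 2 = 0 by decide] at this
  rw [← h0]
  exact Finset.dvd_prod_of_mem _ (Finset.mem_range.mpr hk)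

/-- main: with `b` odd the implication holds. -/
lemma key (b : ℤ) (hb : Odd b) (m : ℕ) (p : ℕ) (pp : p.Prime) (podd : Odd p)
    (pdvd : (p : ℤ) ∣ ((m : ℤ) - 1))
    (hF : (Fcount b m p : ℤ) = ⌈(m : ℚ) / (p : ℚ)⌉) :
    (Fcount b m (2 * p) : ℤ) = ⌈(m : ℚ) / ((2 * p : ℕ) : ℚ)⌉ := by
  obtain ⟨q, hq⟩ := pdvd
  set P : ℤ := (p : ℤ) with hP
  have hP0 : (0:ℤ) < P := by rw [hP]; exact_mod_cast pp.pos
  have hP1 : (1:ℚ) ≤ (p:ℚ) := by exact_mod_cast pp.one_lt.le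
  have hpQ : (0:ℚ) < (p:ℚ) := by positivity
  have hm : (m:ℤ) = P * q + 1 := by linarith [hq]
  have hmQ : (m:ℚ) = (p:ℚ) * (q:ℚ) + 1 := by exact_mod_cast hm
  -- ceiling for p
  have hA : ⌈(m : ℚ) / (p : ℚ)⌉ = q + 1 := by
    rw [Int.ceil_eq_iff]
    constructor
    · rw [lt_div_iff₀ hpQ]; push_cast; nlinarith [hmQ]
    · rw [div_le_iff₀ hpQ]; push_cast; nlinarith [hmQ]
  obtain ⟨t, s, hq2, hs0, hs1⟩ : ∃ t s : ℤ, q = 2*t + s ∧ 0 ≤ s ∧ s ≤ 1 :=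
    ⟨q / 2, q % 2, by omega, by omega, by omega⟩
  have hsQ0 : (0:ℚ) ≤ (s:ℚ) := by exact_mod_cast hs0
  have hsQ1 : (s:ℚ) ≤ 1 := by exact_mod_cast hs1
  have hq2Q : (q:ℚ) = 2*(t:ℚ) + (s:ℚ) := by exact_mod_cast hq2
  -- ceiling for 2p
  have hB : ⌈(m : ℚ) / ((2 * p : ℕ) : ℚ)⌉ = t + 1 := by
    rw [Int.ceil_eq_iff]
    have h2p : ((2 * p : ℕ) : ℚ) = 2 * (p:ℚ) := by push_cast; ring
    rw [h2p]
    constructor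
    · rw [lt_div_iff₀ (by positivity)]; push_cast; nlinarith [hmQ, hq2Q]
    · rw [div_le_iff₀ (by positivity)]; push_cast; nlinarith [hmQ, hq2Q]
  -- hypothesis as ediv
  rw [fcount_eq b m p pp.pos, hA] at hF
  -- derive p ∣ b + 1
  have h1 : P * (b / P) + b % P = b := Int.mul_ediv_add_emod b P
  have hr0 : 0 ≤ b % P := Int.emod_nonneg b hP0.ne'
  have hr1 : b % P < P := Int.emod_lt_of_pos b hP0
  set B : ℤ := b / P with hBdef
  set r : ℤ := b % P with hrdef
  have hrP : r + 1 = P := by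
    by_contra hrp
    have hrp' : r + 1 < P := by omega
    have hbm : b + (m:ℤ) = (r + 1) + P * (B + q) := by rw [hm]; linarith [h1]
    have : (b + (m:ℤ)) / P = B + q := by
      rw [hbm, Int.add_mul_ediv_left _ _ hP0.ne', Int.ediv_eq_zero_of_lt (by linarith) hrp']
      ring
    rw [this] at hF
    omega
  have hb1 : b + 1 = P * (B + 1) := by linarith [h1]
  -- B + 1 is even
  have hev : (2:ℤ) ∣ B + 1 := by
    have h2 : (2:ℤ) ∣ P * (B + 1) := by
      rw [← hb1]
      rcases hb with ⟨c, hc⟩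
      exact ⟨c + 1, by omega⟩
    rcases (Int.prime_two.dvd_mul.mp h2) with h | h
    · exfalso
      rw [hP] at h
      have h' : (2:ℕ) ∣ p := by exact_mod_cast h
      exact (Nat.not_even_iff_odd.mpr podd) (even_iff_two_dvd.mpr h')
    · exact h
  obtain ⟨e, he⟩ := hev
  have hbe : b = 2*P*e - 1 := by linear_combination hb1 + P * he
  -- compute the two edivs
  have hne : (2*P) ≠ 0 := by omega
  have e1 : b / (2*P) = e - 1 := by
    rw [show b = (2*P - 1) + (2*P) * (e - 1) by rw [hbe]; ring,
      Int.add_mul_ediv_left _ _ hne, Int.ediv_eq_zero_of_lt (by linarith) (by linarith)]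
    ring
  have e2 : (b + (m:ℤ)) / (2*P) = e + t := by
    rw [show b + (m:ℤ) = s * P + (2*P) * (e + t) by rw [hbe, hm, hq2]; ring,
      Int.add_mul_ediv_left _ _ hne, Int.ediv_eq_zero_of_lt (by nlinarith) (by nlinarith)]
    ring
  rw [fcount_eq b m (2*p) (Nat.mul_pos two_pos pp.pos), hB,
    show ((2*p : ℕ) : ℤ) = 2*P by push_cast; ring, e1, e2]
  ring


/-- For all `m ≥ 0`, `k ≥ 1` there exists `b` with `φ(b,m,k) = φ_min(m,k)` such that for
every odd prime `p` dividing `m − 1`, `F_{b,m}(p) = ⌈m/p⌉` implies `F_{b,m}(2p) = ⌈m/(2p)⌉`. -/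
theorem exists_min_witness (m k : ℕ) (hk : 1 ≤ k) :
    ∃ b : ℤ, phiInt b m k = phiMin m k ∧
      ∀ p : ℕ, p.Prime → Odd p → (p : ℤ) ∣ ((m : ℤ) - 1) →
        (Fcount b m p : ℤ) = ⌈(m : ℚ) / (p : ℚ)⌉ →
        (Fcount b m (2 * p) : ℤ) = ⌈(m : ℚ) / ((2 * p : ℕ) : ℚ)⌉ := by
  have hP2 : (2:ℤ) ∣ ((primProd k : ℕ) : ℤ) := by
    exact_mod_cast two_dvd_primProd k hk
  have hne : Set.Nonempty {n : ℕ | ∃ b : ℤ, phiInt b m k = n} := ⟨phiInt 0 m k, 0, rfl⟩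
  obtain ⟨b0, hb0⟩ := Nat.sInf_mem hne
  rcases Int.even_or_odd b0 with heven | hodd
  · -- use b0 - 1, which is odd
    have hle : phiInt (b0-1) m k ≤ phiInt b0 m k := by
      apply Finset.card_le_card
      intro a ha
      simp only [Finset.mem_filter, Finset.mem_Ioc] at ha ⊢
      obtain ⟨⟨ha1, ha2⟩, hg⟩ := ha
      have hab : a ≠ b0 := by
        rintro rfl
        have h2a : (2:ℤ) ∣ a := heven.two_dvd
        have h2 : (2:ℤ) ∣ ((Int.gcd a (primProd k) : ℕ) : ℤ) := Int.dvd_coe_gcd h2a hP2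
        rw [hg] at h2
        norm_num at h2
      exact ⟨⟨by omega, by omega⟩, hg⟩
    have hgemin : phiMin m k ≤ phiInt (b0-1) m k := Nat.sInf_le ⟨b0-1, rfl⟩
    have hmin : phiInt (b0-1) m k = phiMin m k := le_antisymm (by rw [phiMin, ← hb0]; exact hle) (by rw [phiMin] at hgemin ⊢; exact hgemin)
    exact ⟨b0-1, hmin, fun p pp podd pdvd hF =>
      key (b0-1) (heven.sub_odd odd_one) m p pp podd pdvd hF⟩
  · exact ⟨b0, hb0, fun p pp podd pdvd hF => key b0 hodd m p pp podd pdvd hF⟩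
end
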